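/- For every non-negative integer n: (1) F̃(n) = (F̃(n) ∩ V₁) ⊕ (F̃(n) ∩ V₂); (2) F̃(n) = (F̃(n) ∩ W₁) ⊕ (F̃(n) ∩ W₂). -/
import Mathlib


open Submodule

/-- The decreasing sequence of subspaces `F̃(n)`:
`F̃(0) = E`, `F̃(n+1) = ∩_{i,j} ((F̃(n) ∩ Vᵢ) + (F̃(n) ∩ Wⱼ))`. -/
noncomputable def FTilde {K E : Type*} [Field K] [AddCommGroup E] [Module K E]
    (V W : Fin 2 → Submodule K E) : ℕ → Submodule K E
  | 0 => ⊤
  | n + 1 => ⨅ i : Fin 2, ⨅ j : Fin 2, (FTilde V W n ⊓ V i) ⊔ (FTilde V W n ⊓ W j)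

lemma aux_split {K E : Type*} [Field K] [AddCommGroup E] [Module K E]
    (V W : Fin 2 → Submodule K E) (F : Submodule K E)
    (hs : (F ⊓ V 0) ⊔ (F ⊓ V 1) = F) :
    ((⨅ i : Fin 2, ⨅ j : Fin 2, (F ⊓ V i) ⊔ (F ⊓ W j)) ⊓ V 0) ⊔
      ((⨅ i : Fin 2, ⨅ j : Fin 2, (F ⊓ V i) ⊔ (F ⊓ W j)) ⊓ V 1) =
      ⨅ i : Fin 2, ⨅ j : Fin 2, (F ⊓ V i) ⊔ (F ⊓ W j) := by
  set F' := ⨅ i : Fin 2, ⨅ j : Fin 2, (F ⊓ V i) ⊔ (F ⊓ W j) with hF'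
  refine le_antisymm (sup_le inf_le_left inf_le_left) ?_
  intro x hx
  have hx' : ∀ i j : Fin 2, x ∈ (F ⊓ V i) ⊔ (F ⊓ W j) := by
    intro i j
    exact (Submodule.mem_iInf _).1 ((Submodule.mem_iInf _).1 hx i) j
  obtain ⟨a, ha, b, hb, hab⟩ := Submodule.mem_sup.1 (hx' 0 0)
  have hbF : b ∈ (F ⊓ V 0) ⊔ (F ⊓ V 1) := by rw [hs]; exact hb.1
  obtain ⟨b0, hb0, b1, hb1, hbb⟩ := Submodule.mem_sup.1 hbF
  have hx0 : a + b0 ∈ F ⊓ V 0 := add_mem ha hb0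
  have hxeq : x = (a + b0) + b1 := by rw [← hab, ← hbb]; abel
  have hx1F' : b1 ∈ F' := by
    rw [hF', Submodule.mem_iInf]; intro i; rw [Submodule.mem_iInf]; intro j
    fin_cases i
    · obtain ⟨a', ha', b', hb', hab'⟩ := Submodule.mem_sup.1 (hx' 0 j)
      have hb1eq : b1 = (a' - (a + b0)) + b' := by
        have h2 : a' + b' = (a + b0) + b1 := hab'.trans hxeq
        have h3 : (a' - (a + b0)) + b' = b1 := by rw [sub_add_eq_add_sub, h2]; abel
        exact h3.symm
      rw [hb1eq]
      exact add_mem (Submodule.mem_sup_left (sub_mem ha' hx0)) (Submodule.mem_sup_right hb')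
    · exact Submodule.mem_sup_left hb1
  have hx0F' : a + b0 ∈ F' := by
    have h : (a + b0 : E) = x - b1 := by rw [hxeq]; abel
    rw [h]; exact sub_mem hx hx1F'
  rw [hxeq]
  exact add_mem (Submodule.mem_sup_left ⟨hx0F', hx0.2⟩) (Submodule.mem_sup_right ⟨hx1F', hb1.2⟩)

/-- For every `n`, `F̃(n) = (F̃(n) ∩ V₁) ⊕ (F̃(n) ∩ V₂)` and
`F̃(n) = (F̃(n) ∩ W₁) ⊕ (F̃(n) ∩ W₂)`. -/
theorem stmt4 {K E : Type*} [Field K] [AddCommGroup E] [Module K E]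
    [FiniteDimensional K E] (hchar : (2 : K) ≠ 0)
    (V W : Fin 2 → Submodule K E)
    (hV : IsCompl (V 0) (V 1)) (hW : IsCompl (W 0) (W 1)) :
    ∀ n : ℕ,
      (Disjoint (FTilde V W n ⊓ V 0) (FTilde V W n ⊓ V 1) ∧
        (FTilde V W n ⊓ V 0) ⊔ (FTilde V W n ⊓ V 1) = FTilde V W n) ∧
      (Disjoint (FTilde V W n ⊓ W 0) (FTilde V W n ⊓ W 1) ∧
        (FTilde V W n ⊓ W 0) ⊔ (FTilde V W n ⊓ W 1) = FTilde V W n) := by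
  intro n
  induction n with
  | zero =>
      refine ⟨⟨hV.disjoint.mono inf_le_right inf_le_right, ?_⟩,
        ⟨hW.disjoint.mono inf_le_right inf_le_right, ?_⟩⟩ <;>
        simp [FTilde, hV.sup_eq_top, hW.sup_eq_top]
  | succ n ih =>
      obtain ⟨⟨_, hVs⟩, ⟨_, hWs⟩⟩ := ih
      have hswap : (⨅ i : Fin 2, ⨅ j : Fin 2, (FTilde V W n ⊓ V i) ⊔ (FTilde V W n ⊓ W j)) =
          ⨅ i : Fin 2, ⨅ j : Fin 2, (FTilde V W n ⊓ W i) ⊔ (FTilde V W n ⊓ V j) := by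
        rw [iInf_comm]
        exact iInf_congr fun i => iInf_congr fun j => sup_comm _ _
      refine ⟨⟨hV.disjoint.mono inf_le_right inf_le_right, ?_⟩,
        ⟨hW.disjoint.mono inf_le_right inf_le_right, ?_⟩⟩
      · show (FTilde V W (n+1) ⊓ V 0) ⊔ (FTilde V W (n+1) ⊓ V 1) = FTilde V W (n+1)
        rw [show FTilde V W (n+1) = ⨅ i : Fin 2, ⨅ j : Fin 2,
          (FTilde V W n ⊓ V i) ⊔ (FTilde V W n ⊓ W j) from rfl]
        exact aux_split V W _ hVs
      · rw [show FTilde V W (n+1) = ⨅ i : Fin 2, ⨅ j : Fin 2,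
          (FTilde V W n ⊓ V i) ⊔ (FTilde V W n ⊓ W j) from rfl, hswap]
        exact aux_split W V _ hWs
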